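/- Let ω > 0, s₁ ≤ s_N, ε > 0, and let f : ℝ → ℝ be measurable with 0 ≤ f(s) ≤ ε for all s ≤ s₁ and all s ≥ s_N, such that s ↦ f(s)·ω e^{s}/(1 + ω² e^{2s}) is integrable on (−∞, s₁] and on [s_N, ∞). Then the truncation error e₂(ω) = |∫_{-∞}^{s₁} f(s)·ωe^{s}/(1+ω²e^{2s}) ds + ∫_{s_N}^{∞} f(s)·ωe^{s}/(1+ω²e^{2s}) ds − f(s₁)·arctan(ω e^{s₁}) − f(s_N)·(π/2 − arctan(ω e^{s_N}))| satisfies e₂(ω) ≤ ε·(π/2 + arctan(ω e^{s₁}) − arctan(ω e^{s_N})) ≤ ε·π. -/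

import Mathlib

open MeasureTheory

lemma h2_hasDerivAt (ω : ℝ) (s : ℝ) :
    HasDerivAt (fun s => Real.arctan (ω * Real.exp s))
      (ω * Real.exp s / (1 + ω ^ 2 * Real.exp (2 * s))) s := by
  have h1 : HasDerivAt (fun s => ω * Real.exp s) (ω * Real.exp s) s :=
    (Real.hasDerivAt_exp s).const_mul ω
  have h2 := (Real.hasDerivAt_arctan (ω * Real.exp s)).comp s h1
  refine h2.congr_deriv ?_
  rw [show (ω * Real.exp s) ^ 2 = ω ^ 2 * Real.exp (2 * s) from by
    rw [two_mul, Real.exp_add]; ring]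
  ring

lemma h2_pos (ω : ℝ) (hω : 0 < ω) (s : ℝ) :
    0 < ω * Real.exp s / (1 + ω ^ 2 * Real.exp (2 * s)) := by
  apply div_pos (by positivity) (by positivity)

lemma h2_intL (ω : ℝ) (hω : 0 < ω) (a : ℝ) :
    IntegrableOn (fun s => ω * Real.exp s / (1 + ω ^ 2 * Real.exp (2 * s))) (Set.Iic a) := by
  apply Integrable.mono' ((integrableOn_exp_Iic a).const_mul ω)
  · exact (Continuous.div (by continuity) (by continuity)
      (fun x => by positivity)).aestronglyMeasurable
  · filter_upwards with s
    rw [Real.norm_eq_abs, abs_of_pos (h2_pos ω hω s)]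
    rw [div_le_iff₀ (by positivity)]
    nlinarith [mul_nonneg (mul_pos hω (Real.exp_pos s)).le
      (mul_nonneg (sq_nonneg ω) (Real.exp_pos (2 * s)).le)]

lemma h2_intR (ω : ℝ) (hω : 0 < ω) (a : ℝ) :
    IntegrableOn (fun s => ω * Real.exp s / (1 + ω ^ 2 * Real.exp (2 * s))) (Set.Ici a) := by
  rw [integrableOn_Ici_iff_integrableOn_Ioi]
  apply Integrable.mono' ((exp_neg_integrableOn_Ioi a one_pos).const_mul ω⁻¹)
  · exact (Continuous.div (by continuity) (by continuity)
      (fun x => by positivity)).aestronglyMeasurable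
  · filter_upwards with s
    rw [Real.norm_eq_abs, abs_of_pos (h2_pos ω hω s)]
    rw [div_le_iff₀ (by positivity)]
    have he : Real.exp (-1 * s) * Real.exp (2 * s) = Real.exp s := by
      rw [← Real.exp_add]; ring_nf
    have key : ω⁻¹ * Real.exp (-1 * s) * (ω ^ 2 * Real.exp (2 * s)) = ω * Real.exp s := by
      calc ω⁻¹ * Real.exp (-1 * s) * (ω ^ 2 * Real.exp (2 * s))
          = (ω⁻¹ * ω) * ω * (Real.exp (-1 * s) * Real.exp (2 * s)) := by ring
        _ = ω * Real.exp s := by rw [he, inv_mul_cancel₀ hω.ne', one_mul]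
    have expand : ω⁻¹ * Real.exp (-1 * s) * (1 + ω ^ 2 * Real.exp (2 * s))
        = ω⁻¹ * Real.exp (-1 * s) + ω * Real.exp s := by rw [mul_add, mul_one, key]
    rw [expand]
    have : 0 < ω⁻¹ * Real.exp (-1 * s) := by positivity
    linarith

lemma h2_integral_Iic (ω : ℝ) (hω : 0 < ω) (a : ℝ) :
    ∫ s in Set.Iic a, ω * Real.exp s / (1 + ω ^ 2 * Real.exp (2 * s))
      = Real.arctan (ω * Real.exp a) := by
  have := MeasureTheory.integral_Iic_of_hasDerivAt_of_tendsto'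
    (f := fun s => Real.arctan (ω * Real.exp s)) (a := a)
    (fun x _ => h2_hasDerivAt ω x) (h2_intL ω hω a) (m := 0) ?_
  · rw [this, sub_zero]
  · have h1 : Filter.Tendsto (fun s => ω * Real.exp s) Filter.atBot (nhds 0) := by
      simpa using (Real.tendsto_exp_atBot.const_mul ω)
    have := (Real.continuous_arctan.tendsto 0).comp h1
    simpa [Real.arctan_zero, Function.comp_def] using this

lemma h2_integral_Ici (ω : ℝ) (hω : 0 < ω) (a : ℝ) :
    ∫ s in Set.Ici a, ω * Real.exp s / (1 + ω ^ 2 * Real.exp (2 * s))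
      = Real.pi / 2 - Real.arctan (ω * Real.exp a) := by
  rw [MeasureTheory.integral_Ici_eq_integral_Ioi]
  have := MeasureTheory.integral_Ioi_of_hasDerivAt_of_tendsto'
    (f := fun s => Real.arctan (ω * Real.exp s)) (a := a)
    (fun x _ => h2_hasDerivAt ω x)
    ((h2_intR ω hω a).mono_set Set.Ioi_subset_Ici_self) (m := Real.pi / 2) ?_
  · rw [this]
  · have h1 : Filter.Tendsto (fun s => ω * Real.exp s) Filter.atTop Filter.atTop :=
      Real.tendsto_exp_atTop.const_mul_atTop hω
    exact (tendsto_nhds_of_tendsto_nhdsWithin Real.tendsto_arctan_atTop).comp h1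

/-- **Truncation error bound for the imaginary kernel `h₂`.**
If `ω > 0`, `s₁ ≤ s_N`, `ε > 0`, and `f` is measurable with `0 ≤ f(s) ≤ ε` for all
`s ≤ s₁` and all `s ≥ s_N`, with the corresponding integrability of `f·h₂` on the tails,
then the truncation error
`e₂(ω) = |∫_{-∞}^{s₁} f h₂ + ∫_{s_N}^{∞} f h₂ − f(s₁) arctan(ω e^{s₁})
          − f(s_N)(π/2 − arctan(ω e^{s_N}))|`
satisfies `e₂(ω) ≤ ε (π/2 + arctan(ω e^{s₁}) − arctan(ω e^{s_N})) ≤ ε π`. -/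
theorem truncation_error_h2 (ω s₁ sN ε : ℝ) (hω : 0 < ω) (hs : s₁ ≤ sN) (hε : 0 < ε)
    (f : ℝ → ℝ) (hf : Measurable f)
    (hbdL : ∀ s, s ≤ s₁ → 0 ≤ f s ∧ f s ≤ ε)
    (hbdR : ∀ s, sN ≤ s → 0 ≤ f s ∧ f s ≤ ε)
    (hintL : IntegrableOn
      (fun s => f s * (ω * Real.exp s / (1 + ω ^ 2 * Real.exp (2 * s)))) (Set.Iic s₁))
    (hintR : IntegrableOn
      (fun s => f s * (ω * Real.exp s / (1 + ω ^ 2 * Real.exp (2 * s)))) (Set.Ici sN)) :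
    |(∫ s in Set.Iic s₁, f s * (ω * Real.exp s / (1 + ω ^ 2 * Real.exp (2 * s)))) +
        (∫ s in Set.Ici sN, f s * (ω * Real.exp s / (1 + ω ^ 2 * Real.exp (2 * s)))) -
        f s₁ * Real.arctan (ω * Real.exp s₁) -
        f sN * (Real.pi / 2 - Real.arctan (ω * Real.exp sN))| ≤
      ε * (Real.pi / 2 + Real.arctan (ω * Real.exp s₁) - Real.arctan (ω * Real.exp sN)) ∧
    ε * (Real.pi / 2 + Real.arctan (ω * Real.exp s₁) - Real.arctan (ω * Real.exp sN)) ≤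
      ε * Real.pi := by
  set k : ℝ → ℝ := fun s => ω * Real.exp s / (1 + ω ^ 2 * Real.exp (2 * s)) with hk
  have hK1 : (0:ℝ) ≤ Real.arctan (ω * Real.exp s₁) := by
    rw [← Real.arctan_zero]
    exact Real.arctan_strictMono.monotone (by positivity)
  have hK2 : (0:ℝ) ≤ Real.pi / 2 - Real.arctan (ω * Real.exp sN) :=
    sub_nonneg.mpr (Real.arctan_lt_pi_div_two _).le
  have hmono : Real.arctan (ω * Real.exp s₁) ≤ Real.arctan (ω * Real.exp sN) :=
    Real.arctan_strictMono.monotone (by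
      have := Real.exp_le_exp.mpr hs
      nlinarith)
  -- bounds on A
  have hA0 : 0 ≤ ∫ s in Set.Iic s₁, f s * k s := by
    apply setIntegral_nonneg measurableSet_Iic
    intro s hsl
    exact mul_nonneg (hbdL s hsl).1 (h2_pos ω hω s).le
  have hA1 : (∫ s in Set.Iic s₁, f s * k s) ≤ ε * Real.arctan (ω * Real.exp s₁) := by
    have : (∫ s in Set.Iic s₁, f s * k s) ≤ ∫ s in Set.Iic s₁, ε * k s := by
      apply setIntegral_mono_on hintL ((h2_intL ω hω s₁).const_mul ε) measurableSet_Iic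
      intro s hsl
      exact mul_le_mul_of_nonneg_right (hbdL s hsl).2 (h2_pos ω hω s).le
    rw [integral_const_mul, h2_integral_Iic ω hω s₁] at this
    exact this
  have hB0 : 0 ≤ ∫ s in Set.Ici sN, f s * k s := by
    apply setIntegral_nonneg measurableSet_Ici
    intro s hsl
    exact mul_nonneg (hbdR s hsl).1 (h2_pos ω hω s).le
  have hB1 : (∫ s in Set.Ici sN, f s * k s) ≤
      ε * (Real.pi / 2 - Real.arctan (ω * Real.exp sN)) := by
    have : (∫ s in Set.Ici sN, f s * k s) ≤ ∫ s in Set.Ici sN, ε * k s := by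
      apply setIntegral_mono_on hintR ((h2_intR ω hω sN).const_mul ε) measurableSet_Ici
      intro s hsl
      exact mul_le_mul_of_nonneg_right (hbdR s hsl).2 (h2_pos ω hω s).le
    rw [integral_const_mul, h2_integral_Ici ω hω sN] at this
    exact this
  have hC0 : 0 ≤ f s₁ * Real.arctan (ω * Real.exp s₁) :=
    mul_nonneg (hbdL s₁ le_rfl).1 hK1
  have hC1 : f s₁ * Real.arctan (ω * Real.exp s₁) ≤ ε * Real.arctan (ω * Real.exp s₁) :=
    mul_le_mul_of_nonneg_right (hbdL s₁ le_rfl).2 hK1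
  have hD0 : 0 ≤ f sN * (Real.pi / 2 - Real.arctan (ω * Real.exp sN)) :=
    mul_nonneg (hbdR sN le_rfl).1 hK2
  have hD1 : f sN * (Real.pi / 2 - Real.arctan (ω * Real.exp sN)) ≤
      ε * (Real.pi / 2 - Real.arctan (ω * Real.exp sN)) :=
    mul_le_mul_of_nonneg_right (hbdR sN le_rfl).2 hK2
  constructor
  · rw [abs_le]
    constructor <;> nlinarith
  · nlinarith [Real.pi_pos]
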